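/- For every natural number m ≥ 2, the series Σ_{j=1}^{∞} 1/(F_j z + F_{j-1})^m converges absolutely for every complex number z that is not equal to -F_{n-1}/F_n for any n ≥ 1 and is not equal to -1/φ, where φ = (1+√5)/2. -/

import Mathlib

open Real

/-- Key real identity: `F_j + ψ * F_{j+1} = ψ^(j+1)` where `ψ` is the golden ratio conjugate. -/
lemma fib_goldConj_key (j : ℕ) :
    (Nat.fib j : ℝ) + goldenConj * (Nat.fib (j + 1) : ℝ) = goldenConj ^ (j + 1) := by
  induction j with
  | zero => simp
  | succ n ih =>
    have h2 : goldenConj ^ 2 = goldenConj + 1 := goldenConj_sq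
    rw [Nat.fib_add_two]
    push_cast
    rw [pow_succ, ← ih]
    have hs : Real.sqrt 5 ^ 2 = 5 := Real.sq_sqrt (by norm_num)
    linear_combination (Nat.fib (n + 1) : ℝ) * h2 - (Nat.fib (n + 1) : ℝ) / 2 * hs

/-- For `m ≥ 2`, the series `Σ_{j ≥ 1} (F_j z + F_{j-1})^{-m}` converges absolutely for every
complex `z` not equal to `-F_{n-1}/F_n` for any `n ≥ 1` and not equal to `-1/φ`. -/
theorem fib_eisenstein_summable (m : ℕ) (hm : 2 ≤ m) (z : ℂ)
    (hz1 : ∀ n : ℕ, 1 ≤ n → z ≠ -((Nat.fib (n - 1) : ℂ) / (Nat.fib n : ℂ)))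
    (hz2 : z ≠ -1 / (((1 + Real.sqrt 5) / 2 : ℝ) : ℂ)) :
    Summable fun j : ℕ => ‖((Nat.fib (j + 1) : ℂ) * z + (Nat.fib j : ℂ)) ^ m‖⁻¹ := by
  clear hz1
  -- the shifted point `w = z + 1/φ` is nonzero
  have hw : z + ((goldenRatio⁻¹ : ℝ) : ℂ) ≠ 0 := by
    intro h
    apply hz2
    have hz : z = -((goldenRatio⁻¹ : ℝ) : ℂ) := by linear_combination h
    rw [hz]
    push_cast
    rw [neg_div, one_div]
  set c : ℝ := ‖z + ((goldenRatio⁻¹ : ℝ) : ℂ)‖ with hc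
  have hcpos : 0 < c := norm_pos_iff.2 hw
  -- key complex decomposition
  have keyC : ∀ j : ℕ, (Nat.fib (j + 1) : ℂ) * z + (Nat.fib j : ℂ)
      = (Nat.fib (j + 1) : ℂ) * (z + ((goldenRatio⁻¹ : ℝ) : ℂ))
        + (((goldenConj ^ (j + 1) : ℝ)) : ℂ) := by
    intro j
    have hk := fib_goldConj_key j
    rw [inv_goldenRatio]
    have : ((goldenConj ^ (j + 1) : ℝ) : ℂ)
        = ((Nat.fib j : ℝ) : ℂ) + (goldenConj : ℝ) * ((Nat.fib (j + 1) : ℝ) : ℂ) := by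
      push_cast [← hk]; ring
    rw [this]
    push_cast
    ring
  -- norm of the conjugate term is at most 1
  have hψ : |goldenConj| < 1 := abs_lt.2 ⟨neg_one_lt_goldenConj, goldenConj_neg.trans one_pos⟩
  have hψ1 : ∀ j : ℕ, |goldenConj ^ (j + 1)| ≤ 1 := by
    intro j
    rw [abs_pow]
    exact pow_le_one₀ (abs_nonneg _) hψ.le
  have h5 : (0 : ℝ) < Real.sqrt 5 := Real.sqrt_pos.2 (by norm_num)
  -- Fibonacci lower bound
  have hfib : ∀ j : ℕ, (goldenRatio ^ (j + 1) - 1) / Real.sqrt 5 ≤ (Nat.fib (j + 1) : ℝ) := by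
    intro j
    rw [Real.coe_fib_eq]
    apply div_le_div_of_nonneg_right _ h5.le
    have : goldenConj ^ (j + 1) ≤ 1 := (le_abs_self _).trans (hψ1 j)
    linarith
  -- lower bound on the norms
  have hlow : ∀ j : ℕ,
      c * (Nat.fib (j + 1) : ℝ) - 1 ≤ ‖(Nat.fib (j + 1) : ℂ) * z + (Nat.fib j : ℂ)‖ := by
    intro j
    rw [keyC j]
    have h1 : ‖(Nat.fib (j + 1) : ℂ) * (z + ((goldenRatio⁻¹ : ℝ) : ℂ))‖
        = (Nat.fib (j + 1) : ℝ) * c := by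
      rw [norm_mul, Complex.norm_natCast]
    have h2 : ‖(((goldenConj ^ (j + 1) : ℝ)) : ℂ)‖ ≤ 1 := by
      rw [Complex.norm_real]; exact hψ1 j
    have := norm_sub_norm_le ((Nat.fib (j + 1) : ℂ) * (z + ((goldenRatio⁻¹ : ℝ) : ℂ)))
      (-(((goldenConj ^ (j + 1) : ℝ)) : ℂ))
    rw [sub_neg_eq_add, norm_neg, h1] at this
    linarith
  set δ : ℝ := c / (2 * Real.sqrt 5) with hδ
  have hδpos : 0 < δ := by positivity
  -- eventual geometric lower bound
  have hev : ∀ᶠ j : ℕ in Filter.atTop,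
      (c / Real.sqrt 5 + 1) / δ ≤ goldenRatio ^ j :=
    (tendsto_pow_atTop_atTop_of_one_lt one_lt_goldenRatio).eventually_ge_atTop _
  obtain ⟨N, hN⟩ := Filter.eventually_atTop.1 hev
  have hgold : (0 : ℝ) < goldenRatio := goldenRatio_pos
  have hkey : ∀ j : ℕ, N ≤ j →
      ‖((Nat.fib (j + 1) : ℂ) * z + (Nat.fib j : ℂ)) ^ m‖⁻¹ ≤ δ⁻¹ * (goldenRatio⁻¹) ^ j := by
    intro j hj
    have hB : (c / Real.sqrt 5 + 1) / δ ≤ goldenRatio ^ j := hN j hj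
    have hφj : goldenRatio ^ j ≤ goldenRatio ^ (j + 1) :=
      pow_le_pow_right₀ one_lt_goldenRatio.le (Nat.le_succ j)
    have hBj : c / Real.sqrt 5 + 1 ≤ δ * goldenRatio ^ (j + 1) := by
      rw [div_le_iff₀ hδpos] at hB
      nlinarith
    set a : ℝ := ‖(Nat.fib (j + 1) : ℂ) * z + (Nat.fib j : ℂ)‖ with ha
    have haδ : δ * goldenRatio ^ (j + 1) ≤ a := by
      have h1 : c * (Nat.fib (j + 1) : ℝ) - 1 ≤ a := hlow j
      have h2 := hfib j
      have h3 : c * ((goldenRatio ^ (j + 1) - 1) / Real.sqrt 5) ≤ c * (Nat.fib (j + 1) : ℝ) :=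
        mul_le_mul_of_nonneg_left h2 hcpos.le
      have h4 : c * ((goldenRatio ^ (j + 1) - 1) / Real.sqrt 5)
          = (c / Real.sqrt 5) * goldenRatio ^ (j + 1) - c / Real.sqrt 5 := by
        field_simp
      have h6 : δ * goldenRatio ^ (j + 1) + (c / Real.sqrt 5 + 1)
          ≤ (c / Real.sqrt 5) * goldenRatio ^ (j + 1) := by
        have : δ + δ = c / Real.sqrt 5 := by rw [hδ]; field_simp; ring
        nlinarith [pow_pos hgold (j + 1)]
      linarith
    have ha1 : 1 ≤ a := by
      have : (1 : ℝ) ≤ δ * goldenRatio ^ (j + 1) := by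
        have : (0 : ℝ) ≤ c / Real.sqrt 5 := by positivity
        linarith
      linarith
    have hapos : 0 < a := lt_of_lt_of_le one_pos ha1
    rw [norm_pow]
    have hpow : a ≤ a ^ m := le_self_pow₀ ha1 (by omega)
    calc (a ^ m)⁻¹ ≤ a⁻¹ := by
          apply inv_anti₀ hapos hpow
      _ ≤ (δ * goldenRatio ^ (j + 1))⁻¹ := by
          apply inv_anti₀ (by positivity) haδ
      _ ≤ δ⁻¹ * (goldenRatio⁻¹) ^ j := by
          rw [mul_inv, ← inv_pow]
          apply mul_le_mul_of_nonneg_left _ (by positivity)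
          apply pow_le_pow_of_le_one (by positivity) (by
            rw [inv_le_one_iff₀]; right; exact one_lt_goldenRatio.le) (Nat.le_succ j)
  -- conclude by comparison with a geometric series
  rw [← summable_nat_add_iff N]
  have hgeo : Summable (fun j : ℕ => (δ⁻¹ * (goldenRatio⁻¹) ^ N) * (goldenRatio⁻¹) ^ j) :=
    (summable_geometric_of_lt_one (by positivity)
      (by rw [inv_lt_one_iff₀]; right; exact one_lt_goldenRatio)).mul_left _
  apply Summable.of_nonneg_of_le (fun j => inv_nonneg.2 (norm_nonneg _)) _ hgeo
  intro j
  have := hkey (j + N) (Nat.le_add_left N j)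
  calc ‖((Nat.fib (j + N + 1) : ℂ) * z + (Nat.fib (j + N) : ℂ)) ^ m‖⁻¹
      ≤ δ⁻¹ * (goldenRatio⁻¹) ^ (j + N) := this
    _ = (δ⁻¹ * (goldenRatio⁻¹) ^ N) * (goldenRatio⁻¹) ^ j := by rw [pow_add]; ring
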